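/- Let Q be a compact LNC subset of ℝⁿ, T : ℝⁿ → ℝᵐ linear, and fix a strictly convex norm on ℝⁿ. For each y ∈ T(Q), there is a unique element g(y) of T⁻¹(y) ∩ Q of minimal norm, and the map g : T(Q) → Q so defined is continuous and satisfies T(g(y)) = y for all y ∈ T(Q). -/

import Mathlib

open Set Filter Topology

/-- Locally nonconical (LNC). -/
def LNC {X : Type*} [AddCommGroup X] [Module ℝ X] [TopologicalSpace X] (Q : Set X) : Prop :=
  ∀ x ∈ Q, ∀ x' ∈ Q,
    ∃ U, U ⊆ Q ∧ U ∈ nhdsWithin x Q ∧ ∀ u ∈ U, u + (2⁻¹ : ℝ) • (x' - x) ∈ Q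

/-- Let `Q ⊆ ℝⁿ` be compact, convex and LNC, `T : ℝⁿ → ℝᵐ` linear, and `ν` a strictly convex
norm on `ℝⁿ`. For each `y ∈ T(Q)` there is a unique element `g y` of `T⁻¹(y) ∩ Q` of minimal
`ν`-norm, and the map `g` so defined is a continuous section of `T|_Q`. -/
theorem lnc_min_norm_section {n m : ℕ}
    (Q : Set (EuclideanSpace ℝ (Fin n)))
    (hcomp : IsCompact Q) (hconv : Convex ℝ Q) (hlnc : LNC Q)
    (T : EuclideanSpace ℝ (Fin n) →ₗ[ℝ] EuclideanSpace ℝ (Fin m))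
    (ν : EuclideanSpace ℝ (Fin n) → ℝ)
    (hν0 : ∀ v, ν v = 0 → v = 0)
    (hνhom : ∀ (a : ℝ) v, ν (a • v) = |a| * ν v)
    (hνtri : ∀ v w, ν (v + w) ≤ ν v + ν w)
    (hνsc : ∀ v w, ν v = 1 → ν w = 1 → v ≠ w → ν ((2⁻¹ : ℝ) • (v + w)) < 1) :
    ∃ g : EuclideanSpace ℝ (Fin m) → EuclideanSpace ℝ (Fin n),
      ContinuousOn g (⇑T '' Q) ∧
      ∀ y ∈ ⇑T '' Q, g y ∈ Q ∧ T (g y) = y ∧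
        (∀ z ∈ Q, T z = y → ν (g y) ≤ ν z) ∧
        (∀ z ∈ Q, T z = y → ν z ≤ ν (g y) → z = g y) := by
  classical
  have hT : Continuous T := T.continuous_of_finiteDimensional
  -- basic properties of ν
  have hν_zero : ν 0 = 0 := by
    have := hνhom 0 0
    simpa using this
  have hν_nonneg : ∀ v, 0 ≤ ν v := by
    intro v
    have h1 : ν (v + (-1 : ℝ) • v) ≤ ν v + ν ((-1 : ℝ) • v) := hνtri _ _
    have h2 : v + (-1 : ℝ) • v = 0 := by module
    rw [h2, hν_zero, hνhom] at h1
    simp only [abs_neg, abs_one, one_mul] at h1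
    linarith
  -- ν is dominated by the Euclidean norm
  have habs : ∀ (v : EuclideanSpace ℝ (Fin n)) (i : Fin n), |v i| ≤ ‖v‖ := by
    intro v i
    rw [EuclideanSpace.norm_eq]
    have h1 : |v i| = Real.sqrt (‖v i‖ ^ 2) := by
      rw [Real.sqrt_sq_eq_abs, Real.norm_eq_abs, abs_abs]
    rw [h1]
    apply Real.sqrt_le_sqrt
    exact Finset.single_le_sum (f := fun j => ‖v j‖ ^ 2)
      (fun j _ => by positivity) (Finset.mem_univ i)
  have hνsum : ∀ (s : Finset (Fin n)) (f : Fin n → EuclideanSpace ℝ (Fin n)),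
      ν (∑ i ∈ s, f i) ≤ ∑ i ∈ s, ν (f i) := by
    intro s f
    induction s using Finset.induction with
    | empty => simp [hν_zero]
    | insert _ _ hnotmem ih =>
      rw [Finset.sum_insert hnotmem, Finset.sum_insert hnotmem]
      exact le_trans (hνtri _ _) (by linarith)
  obtain ⟨C, hC0, hC⟩ : ∃ C, 0 ≤ C ∧ ∀ v, ν v ≤ C * ‖v‖ := by
    refine ⟨∑ i : Fin n, ν (EuclideanSpace.single i (1 : ℝ)), Finset.sum_nonneg
      (fun i _ => hν_nonneg _), fun v => ?_⟩
    have hrepr : ∑ i : Fin n, v i • EuclideanSpace.single i (1 : ℝ) = v := by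
      have := (EuclideanSpace.basisFun (Fin n) ℝ).sum_repr v
      simpa [EuclideanSpace.basisFun_apply, EuclideanSpace.basisFun_repr] using this
    calc ν v = ν (∑ i : Fin n, v i • EuclideanSpace.single i (1 : ℝ)) := by rw [hrepr]
      _ ≤ ∑ i : Fin n, ν (v i • EuclideanSpace.single i (1 : ℝ)) := hνsum _ _
      _ = ∑ i : Fin n, |v i| * ν (EuclideanSpace.single i (1 : ℝ)) := by
          simp [hνhom]
      _ ≤ ∑ i : Fin n, ‖v‖ * ν (EuclideanSpace.single i (1 : ℝ)) := by
          apply Finset.sum_le_sum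
          intro i _
          exact mul_le_mul_of_nonneg_right (habs v i) (hν_nonneg _)
      _ = (∑ i : Fin n, ν (EuclideanSpace.single i (1 : ℝ))) * ‖v‖ := by
          rw [← Finset.mul_sum, mul_comm]
  have hνcont : Continuous ν := by
    have hlip : ∀ v w, |ν v - ν w| ≤ C * ‖v - w‖ := by
      intro v w
      have h1 : ν v ≤ ν (v - w) + ν w := by
        have := hνtri (v - w) w
        simpa using this
      have h2 : ν w ≤ ν (v - w) + ν v := by
        have h3 : ν (w - v) = ν (v - w) := by
          have : w - v = (-1 : ℝ) • (v - w) := by module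
          rw [this, hνhom]; simp
        have := hνtri (w - v) v
        rw [h3] at this
        simpa using this
      have h4 := hC (v - w)
      rw [abs_sub_le_iff]
      constructor <;> linarith
    rw [Metric.continuous_iff]
    intro v ε hε
    rcases le_or_gt C 0 with hCle | hCpos
    · refine ⟨1, one_pos, fun w _ => ?_⟩
      have h1 := hlip w v
      have h2 : C * ‖w - v‖ ≤ 0 := mul_nonpos_of_nonpos_of_nonneg hCle (norm_nonneg _)
      rw [Real.dist_eq]
      have := abs_nonneg (ν w - ν v)
      linarith
    · refine ⟨ε / C, by positivity, fun w hw => ?_⟩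
      rw [Real.dist_eq]
      calc |ν w - ν v| ≤ C * ‖w - v‖ := hlip w v
        _ = C * dist w v := by rw [dist_eq_norm]
        _ < C * (ε / C) := by exact mul_lt_mul_of_pos_left hw hCpos
        _ = ε := by field_simp
  -- fibers are compact
  have hFc : ∀ y, IsCompact (Q ∩ T ⁻¹' {y}) := fun y =>
    hcomp.inter_right (isClosed_singleton.preimage hT)
  have hFne : ∀ y ∈ ⇑T '' Q, (Q ∩ T ⁻¹' {y}).Nonempty := by
    rintro y ⟨x, hx, rfl⟩
    exact ⟨x, hx, rfl⟩
  -- existence of minimizers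
  have hex : ∀ y ∈ ⇑T '' Q, ∃ x, x ∈ Q ∧ T x = y ∧ ∀ z ∈ Q, T z = y → ν x ≤ ν z := by
    intro y hy
    obtain ⟨x, hx, hmin⟩ := (hFc y).exists_isMinOn (hFne y hy) hνcont.continuousOn
    exact ⟨x, hx.1, hx.2, fun z hz hTz => hmin (show z ∈ Q ∩ T ⁻¹' {y} from ⟨hz, hTz⟩)⟩
  -- uniqueness of minimizers
  have huniq : ∀ y, ∀ x ∈ Q, T x = y → (∀ z ∈ Q, T z = y → ν x ≤ ν z) →
      ∀ z ∈ Q, T z = y → ν z ≤ ν x → z = x := by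
    intro y x hxQ hTx hmin z hzQ hTz hle
    by_contra hne
    have hνzx : ν z = ν x := le_antisymm hle (hmin z hzQ hTz)
    have hμ0 : 0 < ν x := by
      rcases (hν_nonneg x).lt_or_eq with h | h
      · exact h
      · exfalso
        apply hne
        have hx0 : x = 0 := hν0 x h.symm
        have hz0 : z = 0 := hν0 z (by rw [hνzx, ← h])
        rw [hx0, hz0]
    set μ := ν x with hμ
    -- the midpoint
    have hmidQ : (2⁻¹ : ℝ) • (z + x) ∈ Q := by
      have := hconv hzQ hxQ (by norm_num : (0:ℝ) ≤ 2⁻¹) (by norm_num : (0:ℝ) ≤ 2⁻¹)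
        (by norm_num)
      have heq : (2⁻¹ : ℝ) • z + (2⁻¹ : ℝ) • x = (2⁻¹ : ℝ) • (z + x) := by module
      rwa [heq] at this
    have hmidT : T ((2⁻¹ : ℝ) • (z + x)) = y := by
      rw [map_smul, map_add, hTz, hTx]
      have : (2⁻¹ : ℝ) • (y + y) = y := by module
      exact this
    have h1 : ν (μ⁻¹ • z) = 1 := by
      rw [hνhom, hνzx, abs_of_pos (inv_pos.mpr hμ0)]
      field_simp
    have h2 : ν (μ⁻¹ • x) = 1 := by
      rw [hνhom, abs_of_pos (inv_pos.mpr hμ0)]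
      field_simp
      exact hμ.symm
    have hne' : μ⁻¹ • z ≠ μ⁻¹ • x := by
      intro h
      exact hne (smul_right_injective _ (inv_ne_zero hμ0.ne') h)
    have hsc := hνsc _ _ h1 h2 hne'
    have heq : (2⁻¹ : ℝ) • (μ⁻¹ • z + μ⁻¹ • x) = μ⁻¹ • ((2⁻¹ : ℝ) • (z + x)) := by
      module
    rw [heq, hνhom, abs_of_pos (inv_pos.mpr hμ0)] at hsc
    have hlt : ν ((2⁻¹ : ℝ) • (z + x)) < μ := by
      have := mul_lt_mul_of_pos_left hsc hμ0
      rw [← mul_assoc, mul_inv_cancel₀ hμ0.ne', one_mul, mul_one] at this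
      exact this
    exact absurd (hmin _ hmidQ hmidT) (not_le.mpr hlt)
  -- key fiber-continuity lemma (uses LNC)
  have hfiber : ∀ x ∈ Q, ∀ yk : ℕ → EuclideanSpace ℝ (Fin m),
      (∀ k, yk k ∈ ⇑T '' Q) → Tendsto yk atTop (𝓝 (T x)) →
      ∃ q : ℕ → EuclideanSpace ℝ (Fin n),
        (∀ k, q k ∈ Q ∧ T (q k) = yk k) ∧ Tendsto q atTop (𝓝 x) := by
    intro x hxQ yk hykmem hyk
    have hq : ∀ k, ∃ q, (q ∈ Q ∧ T q = yk k) ∧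
        ∀ z ∈ Q, T z = yk k → dist q x ≤ dist z x := by
      intro k
      obtain ⟨q, hqmem, hqmin⟩ := (hFc (yk k)).exists_isMinOn (hFne _ (hykmem k))
        ((continuous_id.dist continuous_const).continuousOn)
      exact ⟨q, ⟨hqmem.1, hqmem.2⟩, fun z hz hTz =>
        hqmin (show z ∈ Q ∩ T ⁻¹' {yk k} from ⟨hz, hTz⟩)⟩
    choose q hqmem hqmin using hq
    refine ⟨q, hqmem, ?_⟩
    apply tendsto_of_subseq_tendsto
    intro ns hns
    obtain ⟨z, hzQ, ms, hmsmono, hzt⟩ :=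
      hcomp.tendsto_subseq (x := fun k => q (ns k)) (fun k => (hqmem (ns k)).1)
    refine ⟨ms, ?_⟩
    have hykt : Tendsto (fun k => yk (ns (ms k))) atTop (𝓝 (T x)) :=
      hyk.comp (hns.comp hmsmono.tendsto_atTop)
    have hTz : T z = T x := by
      have h1 : Tendsto (fun k => T (q (ns (ms k)))) atTop (𝓝 (T z)) :=
        (hT.tendsto z).comp hzt
      have h2 : (fun k => T (q (ns (ms k)))) = fun k => yk (ns (ms k)) :=
        funext fun k => (hqmem _).2
      rw [h2] at h1
      exact tendsto_nhds_unique h1 hykt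
    suffices hzx : z = x by rw [← hzx]; exact hzt
    -- use LNC at z toward x
    obtain ⟨U, hUQ, hUnhd, hUmove⟩ := hlnc z hzQ x hxQ
    have hztQ : Tendsto (fun k => q (ns (ms k))) atTop (𝓝[Q] z) :=
      tendsto_nhdsWithin_iff.mpr ⟨hzt, Eventually.of_forall fun k => (hqmem _).1⟩
    have hzU : ∀ᶠ k in atTop, q (ns (ms k)) ∈ U := hztQ hUnhd
    have hd1 : Tendsto (fun k => dist (q (ns (ms k))) x) atTop (𝓝 (dist z x)) :=
      ((continuous_id.dist continuous_const).tendsto z).comp hzt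
    have hd2 : Tendsto (fun k => dist (q (ns (ms k)) + (2⁻¹ : ℝ) • (x - z)) x) atTop
        (𝓝 (dist (z + (2⁻¹ : ℝ) • (x - z)) x)) := by
      have hcont : Continuous (fun u : EuclideanSpace ℝ (Fin n) =>
          dist (u + (2⁻¹ : ℝ) • (x - z)) x) :=
        (continuous_id.add continuous_const).dist continuous_const
      exact (hcont.tendsto z).comp hzt
    have hineq : ∀ᶠ k in atTop,
        dist (q (ns (ms k))) x ≤ dist (q (ns (ms k)) + (2⁻¹ : ℝ) • (x - z)) x := by
      filter_upwards [hzU] with k hk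
      apply hqmin (ns (ms k)) _ (hUmove _ hk)
      rw [map_add, map_smul, map_sub, hTz, sub_self, smul_zero, add_zero, (hqmem _).2]
    have hle : dist z x ≤ dist (z + (2⁻¹ : ℝ) • (x - z)) x :=
      le_of_tendsto_of_tendsto hd1 hd2 hineq
    have heq : dist (z + (2⁻¹ : ℝ) • (x - z)) x = dist z x / 2 := by
      rw [dist_eq_norm, dist_eq_norm]
      have h5 : z + (2⁻¹ : ℝ) • (x - z) - x = (2⁻¹ : ℝ) • (z - x) := by module
      rw [h5, norm_smul]
      simp [norm_inv]
      ring
    rw [heq] at hle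
    have hd0 : dist z x ≤ 0 := by linarith
    exact dist_le_zero.mp hd0
  -- define the selection g
  choose! g hgQ hgT hgmin using hex
  -- the key convergence lemma for g
  have hkey : ∀ y ∈ ⇑T '' Q, ∀ yk : ℕ → EuclideanSpace ℝ (Fin m),
      (∀ k, yk k ∈ ⇑T '' Q) → Tendsto yk atTop (𝓝 y) →
      Tendsto (fun k => g (yk k)) atTop (𝓝 (g y)) := by
    intro y hy yk hykmem hyk
    apply tendsto_of_subseq_tendsto
    intro ns hns
    obtain ⟨z, hzQ, ms, hmsmono, hzt⟩ :=
      hcomp.tendsto_subseq (x := fun k => g (yk (ns k)))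
        (fun k => hgQ _ (hykmem (ns k)))
    refine ⟨ms, ?_⟩
    have hykt : Tendsto (fun k => yk (ns (ms k))) atTop (𝓝 y) :=
      hyk.comp (hns.comp hmsmono.tendsto_atTop)
    have hTz : T z = y := by
      have h1 : Tendsto (fun k => T (g (yk (ns (ms k))))) atTop (𝓝 (T z)) :=
        (hT.tendsto z).comp hzt
      have h2 : (fun k => T (g (yk (ns (ms k))))) = fun k => yk (ns (ms k)) :=
        funext fun k => hgT _ (hykmem _)
      rw [h2] at h1
      exact tendsto_nhds_unique h1 hykt
    suffices hzg : z = g y by rw [← hzg]; exact hzt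
    -- get approximating fiber points converging to g y
    have hTgy : T (g y) = y := hgT y hy
    obtain ⟨p, hpmem, hpt⟩ := hfiber (g y) (hgQ y hy) (fun k => yk (ns (ms k)))
      (fun k => hykmem _) (by rwa [hTgy])
    have hν1 : Tendsto (fun k => ν (g (yk (ns (ms k))))) atTop (𝓝 (ν z)) :=
      (hνcont.tendsto z).comp hzt
    have hν2 : Tendsto (fun k => ν (p k)) atTop (𝓝 (ν (g y))) :=
      (hνcont.tendsto (g y)).comp hpt
    have hν3 : ∀ k, ν (g (yk (ns (ms k)))) ≤ ν (p k) := fun k =>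
      hgmin _ (hykmem _) (p k) (hpmem k).1 (hpmem k).2
    have hνle : ν z ≤ ν (g y) :=
      le_of_tendsto_of_tendsto hν1 hν2 (Eventually.of_forall hν3)
    exact huniq y (g y) (hgQ y hy) hTgy (hgmin y hy) z hzQ hTz hνle
  refine ⟨g, ?_, fun y hy => ⟨hgQ y hy, hgT y hy, hgmin y hy,
    fun z hz hTz hle => huniq y (g y) (hgQ y hy) (hgT y hy) (hgmin y hy) z hz hTz hle⟩⟩
  -- continuity
  intro y hy
  rw [ContinuousWithinAt]
  apply tendsto_of_subseq_tendsto
  intro ys hys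
  rw [tendsto_nhdsWithin_iff] at hys
  obtain ⟨hys1, hys2⟩ := hys
  obtain ⟨N, hN⟩ := eventually_atTop.mp hys2
  refine ⟨fun k => k + N, ?_⟩
  exact hkey y hy (fun k => ys (k + N)) (fun k => hN _ (Nat.le_add_left N k))
    (hys1.comp (tendsto_add_atTop_nat N))
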